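/- Let β > 0, γ⁺ ≥ 0, and D be a diagonal n×n matrix with diagonal entries d_i > 0. Consider the (n+1)×(n+1) symmetric block matrix M = [[β𝟙𝟙ᵀ + D, β𝟙],[β𝟙ᵀ, γ⁺β]]. If γ⁺ ≥ 1 − (1 + Σ_{i=1}^n β/d_i)⁻¹, then M is positive semidefinite. -/

import Mathlib

open Matrix

/-- The block matrix `M = [[β𝟙𝟙ᵀ + D, β𝟙],[β𝟙ᵀ, γ⁺β]]` is positive semidefinite
whenever `γ⁺ ≥ 1 − (1 + Σᵢ β/dᵢ)⁻¹`, where `D = diag(d)` with `dᵢ > 0` and `β > 0`. -/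
theorem stmt4 {n : ℕ} (β γplus : ℝ) (hβ : 0 < β) (hγ : 0 ≤ γplus)
    (d : Fin n → ℝ) (hd : ∀ i, 0 < d i)
    (hcond : γplus ≥ 1 - (1 + ∑ i, β / d i)⁻¹) :
    (Matrix.fromBlocks
      (Matrix.of (fun (_ _ : Fin n) => β) + Matrix.diagonal d)
      (Matrix.of (fun (_ : Fin n) (_ : Unit) => β))
      (Matrix.of (fun (_ : Unit) (_ : Fin n) => β))
      (Matrix.of (fun (_ _ : Unit) => γplus * β))).PosSemidef := by
  rw [Matrix.posSemidef_iff_dotProduct_mulVec]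
  constructor
  · ext (i|i) (j|j) <;>
      simp only [Matrix.conjTranspose_apply, Matrix.fromBlocks_apply₁₁, Matrix.fromBlocks_apply₁₂,
        Matrix.fromBlocks_apply₂₁, Matrix.fromBlocks_apply₂₂, Matrix.add_apply, Matrix.of_apply,
        Matrix.diagonal_apply, star_trivial]
    · rcases eq_or_ne i j with h|h <;> simp [h, eq_comm]
  intro x
  set s := ∑ i, x (Sum.inl i) with hs
  set t := x (Sum.inr ()) with ht
  have hquad : dotProduct (star x)
      ((Matrix.fromBlocks
      (Matrix.of (fun (_ _ : Fin n) => β) + Matrix.diagonal d)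
      (Matrix.of (fun (_ : Fin n) (_ : Unit) => β))
      (Matrix.of (fun (_ : Unit) (_ : Fin n) => β))
      (Matrix.of (fun (_ _ : Unit) => γplus * β))) *ᵥ x)
      = β * (s + t)^2 + (∑ i, d i * (x (Sum.inl i))^2) + (γplus - 1) * β * t^2 := by
    simp only [dotProduct, star_trivial, mulVec, Fintype.sum_sum_type,
      Finset.univ_unique, Finset.sum_singleton, fromBlocks_apply₁₁, fromBlocks_apply₁₂,
      fromBlocks_apply₂₁, fromBlocks_apply₂₂, Matrix.add_apply, Matrix.of_apply,
      Matrix.diagonal_apply, add_mul, Finset.sum_add_distrib, mul_ite, mul_zero,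
      Finset.sum_ite_eq, Finset.mem_univ, if_true]
    have h1 : ∀ i, (∑ j, (if i = j then d i else 0) * x (Sum.inl j)) = d i * x (Sum.inl i) := by
      intro i; simp
    have h2 : ∑ i, x (Sum.inl i) * (d i * x (Sum.inl i)) = ∑ i, d i * x (Sum.inl i) ^ 2 := by
      apply Finset.sum_congr rfl; intro i _; ring
    simp only [h1, mul_assoc, ← Finset.mul_sum, ← Finset.sum_mul, Finset.sum_add_distrib, h2,
      ← hs, ← ht]
    have h4 := Finset.sum_congr rfl (fun i (_ : i ∈ Finset.univ) => (by ring :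
        x (Sum.inl i) * (β * s + d i * x (Sum.inl i) + β * t)
        = d i * x (Sum.inl i) ^ 2 + β * (s + t) * x (Sum.inl i)))
    rw [h4, Finset.sum_add_distrib, ← Finset.mul_sum, ← hs]
    ring
  rw [hquad]
  have hC : 0 < β⁻¹ + ∑ i, (d i)⁻¹ :=
    add_pos_of_pos_of_nonneg (inv_pos.mpr hβ)
      (Finset.sum_nonneg fun i _ => (inv_pos.mpr (hd i)).le)
  have cauchy : t ^ 2 ≤ (β * (s + t) ^ 2 + ∑ i, d i * x (Sum.inl i) ^ 2)
      * (β⁻¹ + ∑ i, (d i)⁻¹) := by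
    have h := Finset.sum_mul_sq_le_sq_mul_sq Finset.univ
      (Sum.elim (fun i : Fin n => Real.sqrt (d i) * x (Sum.inl i))
        (fun _ : Unit => Real.sqrt β * (s + t)))
      (Sum.elim (fun i : Fin n => -(Real.sqrt (d i))⁻¹) (fun _ : Unit => (Real.sqrt β)⁻¹))
    simp only [Fintype.sum_sum_type, Finset.univ_unique, Finset.sum_singleton,
      Sum.elim_inl, Sum.elim_inr] at h
    have e1 : ∀ i : Fin n, Real.sqrt (d i) * x (Sum.inl i) * -(Real.sqrt (d i))⁻¹
        = -(x (Sum.inl i)) := by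
      intro i
      have hne : Real.sqrt (d i) ≠ 0 := ne_of_gt (Real.sqrt_pos.mpr (hd i))
      field_simp
    have e2 : Real.sqrt β * (s + t) * (Real.sqrt β)⁻¹ = s + t := by
      have hne : Real.sqrt β ≠ 0 := ne_of_gt (Real.sqrt_pos.mpr hβ)
      field_simp
    have e3 : ∀ i : Fin n, (Real.sqrt (d i) * x (Sum.inl i)) ^ 2
        = d i * x (Sum.inl i) ^ 2 := by
      intro i
      rw [mul_pow, Real.sq_sqrt (hd i).le]
    have e4 : (Real.sqrt β * (s + t)) ^ 2 = β * (s + t) ^ 2 := by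
      rw [mul_pow, Real.sq_sqrt hβ.le]
    have e5 : ∀ i : Fin n, (-(Real.sqrt (d i))⁻¹) ^ 2 = (d i)⁻¹ := by
      intro i
      rw [neg_pow, inv_pow, Real.sq_sqrt (hd i).le]
      simp
    have e6 : ((Real.sqrt β)⁻¹) ^ 2 = β⁻¹ := by
      rw [inv_pow, Real.sq_sqrt hβ.le]
    simp only [e1, e2, e3, e4, e5, e6, Finset.sum_neg_distrib, ← hs] at h
    calc t ^ 2 = (-s + (s + t)) ^ 2 := by ring
      _ ≤ (∑ i, d i * x (Sum.inl i) ^ 2 + β * (s + t) ^ 2)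
          * (∑ i, (d i)⁻¹ + β⁻¹) := h
      _ = _ := by ring
  have hS : (0:ℝ) < 1 + ∑ i, β / d i := by
    have : 0 ≤ ∑ i, β / d i := Finset.sum_nonneg fun i _ => (div_pos hβ (hd i)).le
    linarith
  have hβC : 1 + ∑ i, β / d i = β * (β⁻¹ + ∑ i, (d i)⁻¹) := by
    rw [mul_add, mul_inv_cancel₀ hβ.ne', Finset.mul_sum]
    simp [div_eq_mul_inv]
  have h5 : 1 - γplus ≤ (1 + ∑ i, β / d i)⁻¹ := by linarith
  have hkey : (1 - γplus) * (β * t ^ 2)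
      ≤ β * (s + t) ^ 2 + ∑ i, d i * x (Sum.inl i) ^ 2 := by
    have step1 : (1 - γplus) * (β * t ^ 2) ≤ (1 + ∑ i, β / d i)⁻¹ * (β * t ^ 2) := by
      apply mul_le_mul_of_nonneg_right h5
      positivity
    have step2 : (1 + ∑ i, β / d i)⁻¹ * (β * t ^ 2)
        = t ^ 2 / (β⁻¹ + ∑ i, (d i)⁻¹) := by
      rw [hβC]
      field_simp
    have step3 : t ^ 2 / (β⁻¹ + ∑ i, (d i)⁻¹)
        ≤ β * (s + t) ^ 2 + ∑ i, d i * x (Sum.inl i) ^ 2 := by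
      rw [div_le_iff₀ hC]
      exact cauchy
    linarith
  nlinarith [hkey]
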